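/- (Heisenberg's Principle, finite-dimensional version.) Let E : M_p(ℂ) ⊗ M_q(ℂ) → M_p(ℂ) be a linear map (on matrices indexed by (Fin p × Fin q), with tensor product realized as the Kronecker product) which is unital (E(1) = 1), positive (x ≥ 0 implies E(x) ≥ 0 in the Loewner order), and satisfies the Kadison–Schwarz inequality E(x)* E(x) ≤ E(x* x) for all x (this holds for every completely positive unital map). Assume E(a ⊗ 1_q) = a for all a ∈ M_p(ℂ). Then for every b ∈ M_q(ℂ), the matrix E(1_p ⊗ b) lies in the center of M_p(ℂ), i.e. E(1_p ⊗ b) · a = a · E(1_p ⊗ b) for all a ∈ M_p(ℂ). -/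

import Mathlib

open scoped ComplexOrder
open Kronecker Matrix

private lemma quad_zero {n : ℕ} (M : Matrix (Fin n) (Fin n) ℂ)
    (h : ∀ ξ : Fin n → ℂ, star ξ ⬝ᵥ (M *ᵥ ξ) = 0) : M = 0 := by
  have key : ∀ ξ η : Fin n → ℂ, star ξ ⬝ᵥ (M *ᵥ η) = 0 := by
    intro ξ η
    have h1 := h (ξ + η)
    have h2 := h (ξ + Complex.I • η)
    have hξ := h ξ
    have hη := h η
    simp only [star_add, star_smul, add_dotProduct, smul_dotProduct, mulVec_add, mulVec_smul,
      dotProduct_add, dotProduct_smul, hξ, hη, smul_eq_mul, RCLike.star_def, map_zero,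
      Complex.conj_I, add_zero, zero_add, mul_zero] at h1 h2
    set u := star ξ ⬝ᵥ (M *ᵥ η)
    set v := star η ⬝ᵥ (M *ᵥ ξ)
    ring_nf at h1 h2 ⊢
    linear_combination (1/2 : ℂ) * h1 - (Complex.I/2) * h2 + ((u - v)/2) * Complex.I_sq
  ext i j
  have := key (Pi.single i 1) (Pi.single j 1)
  simpa [dotProduct, mulVec, Pi.single_apply, Finset.sum_ite_eq, apply_ite] using this

private lemma key_scalar (s d : ℂ) (hd : 0 ≤ d)
    (h : ∀ t : ℝ, 0 ≤ (t : ℂ) * s + (t : ℂ) ^ 2 * d) : s = 0 := by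
  rw [Complex.le_def] at hd
  simp only [Complex.zero_re, Complex.zero_im] at hd
  have him : s.im = 0 := by
    have h1 := (Complex.le_def.mp (h 1)).2
    simp [Complex.add_im, Complex.mul_im, ← hd.2] at h1
    linarith [h1]
  have hre : s.re = 0 := by
    have hd1 : (0:ℝ) < d.re + 1 := by linarith [hd.1]
    have ht := (Complex.le_def.mp (h (-(s.re) / (d.re + 1)))).1
    simp only [Complex.add_re, Complex.mul_re, Complex.ofReal_re, Complex.ofReal_im, him,
      ← Complex.ofReal_pow, ← hd.2, Complex.zero_re, mul_zero, zero_mul, sub_zero,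
      add_zero] at ht
    have ht2 : 0 ≤ (-s.re / (d.re + 1) * s.re + (-s.re / (d.re + 1)) ^ 2 * d.re) * (d.re+1)^2 :=
      mul_nonneg ht (by positivity)
    have he : (-s.re / (d.re + 1) * s.re + (-s.re / (d.re + 1)) ^ 2 * d.re) * (d.re+1)^2
        = -(s.re^2) * (d.re+1) + s.re^2 * d.re := by
      field_simp
    rw [he] at ht2
    nlinarith [sq_nonneg s.re]
  exact Complex.ext hre him
private lemma kron_conjTranspose {p q : ℕ} (a : Matrix (Fin p) (Fin p) ℂ)
    (b : Matrix (Fin q) (Fin q) ℂ) : (a ⊗ₖ b)ᴴ = aᴴ ⊗ₖ bᴴ := by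
  ext ⟨i, j⟩ ⟨k, l⟩
  simp [conjTranspose_apply, kroneckerMap_apply, _root_.map_mul]

theorem heisenberg_principle {p q : ℕ}
    (E : Matrix (Fin p × Fin q) (Fin p × Fin q) ℂ →ₗ[ℂ] Matrix (Fin p) (Fin p) ℂ)
    (hunital : E 1 = 1)
    (hpos : ∀ x : Matrix (Fin p × Fin q) (Fin p × Fin q) ℂ, x.PosSemidef → (E x).PosSemidef)
    (hKS : ∀ x : Matrix (Fin p × Fin q) (Fin p × Fin q) ℂ,
      (E (xᴴ * x) - (E x)ᴴ * (E x)).PosSemidef)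
    (hid : ∀ a : Matrix (Fin p) (Fin p) ℂ, E (a ⊗ₖ (1 : Matrix (Fin q) (Fin q) ℂ)) = a) :
    ∀ (b : Matrix (Fin q) (Fin q) ℂ) (a : Matrix (Fin p) (Fin p) ℂ),
      E ((1 : Matrix (Fin p) (Fin p) ℂ) ⊗ₖ b) * a = a * E ((1 : Matrix (Fin p) (Fin p) ℂ) ⊗ₖ b) := by
  -- E of `uᴴ * u` is Hermitian
  have hermE : ∀ u, (E (uᴴ * u)).IsHermitian := by
    intro u
    have h1 := (hKS u).1
    have h2 : ((E u)ᴴ * E u).IsHermitian := isHermitian_conjTranspose_mul_self _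
    simpa using h1.add h2
  -- E preserves Hermitian matrices
  have hermE' : ∀ h : Matrix (Fin p × Fin q) (Fin p × Fin q) ℂ,
      h.IsHermitian → (E h).IsHermitian := by
    intro h hh
    have m : (1 + h)ᴴ * (1 + h) - (1 - h)ᴴ * (1 - h) = h + h + h + h := by
      rw [conjTranspose_add, conjTranspose_sub, conjTranspose_one, hh]
      noncomm_ring
    have e4 : E ((1 + h)ᴴ * (1 + h)) - E ((1 - h)ᴴ * (1 - h)) = E h + E h + E h + E h := by
      rw [← map_sub, m, map_add, map_add, map_add]
    have h4 : (4 : ℂ) • (E h)ᴴ = (4 : ℂ) • E h := by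
      have hc := congrArg conjTranspose e4
      rw [conjTranspose_sub, (hermE (1 + h)), (hermE (1 - h)), e4,
        conjTranspose_add, conjTranspose_add, conjTranspose_add] at hc
      calc (4 : ℂ) • (E h)ᴴ = (E h)ᴴ + (E h)ᴴ + (E h)ᴴ + (E h)ᴴ := by module
        _ = E h + E h + E h + E h := hc.symm
        _ = (4 : ℂ) • E h := by module
    exact smul_right_injective _ (by norm_num : (4 : ℂ) ≠ 0) h4
  -- E is star-preserving
  have star_pres : ∀ u, E (uᴴ) = (E u)ᴴ := by
    intro u
    have H1 : (u + uᴴ).IsHermitian := by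
      rw [Matrix.IsHermitian, conjTranspose_add, conjTranspose_conjTranspose, add_comm]
    have H2 : (Complex.I • (u - uᴴ)).IsHermitian := by
      rw [Matrix.IsHermitian, conjTranspose_smul, conjTranspose_sub,
        conjTranspose_conjTranspose, Complex.star_def, Complex.conj_I, neg_smul, ← smul_neg,
        neg_sub]
    have eq1 : (E u)ᴴ + (E uᴴ)ᴴ = E u + E uᴴ := by
      have h := (hermE' _ H1).eq
      rwa [map_add, conjTranspose_add] at h
    have eq2 : (E u)ᴴ - (E uᴴ)ᴴ = E uᴴ - E u := by
      have h := (hermE' _ H2).eq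
      rw [_root_.map_smul, map_sub, conjTranspose_smul, conjTranspose_sub, Complex.star_def,
        Complex.conj_I] at h
      have h' := congrArg (fun M => Complex.I • M) h
      simp only [smul_smul, mul_neg, Complex.I_mul_I, neg_neg, one_smul, neg_mul] at h'
      rw [h']
      module
    have h2s : (2 : ℂ) • (E uᴴ) = (2 : ℂ) • (E u)ᴴ := by
      calc (2 : ℂ) • (E uᴴ) = (E u + E uᴴ) + (E uᴴ - E u) := by module
        _ = ((E u)ᴴ + (E uᴴ)ᴴ) + ((E u)ᴴ - (E uᴴ)ᴴ) := by rw [eq1, eq2]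
        _ = (2 : ℂ) • (E u)ᴴ := by module
    exact smul_right_injective _ (two_ne_zero) h2s
  -- multiplicative domain property for `a ⊗ 1`
  have mult : ∀ (a : Matrix (Fin p) (Fin p) ℂ) (y : Matrix (Fin p × Fin q) (Fin p × Fin q) ℂ),
      E ((a ⊗ₖ 1) * y) = a * E y ∧ E (yᴴ * (aᴴ ⊗ₖ 1)) = (E y)ᴴ * aᴴ := by
    intro a y
    set x : Matrix (Fin p × Fin q) (Fin p × Fin q) ℂ := aᴴ ⊗ₖ 1 with hxdef
    have hx : E x = aᴴ := hid _
    have hxH : xᴴ = a ⊗ₖ 1 := by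
      rw [hxdef, kron_conjTranspose, conjTranspose_conjTranspose, conjTranspose_one]
    have hxx : E (xᴴ * x) = (E x)ᴴ * E x := by
      rw [hxH, hxdef, ← mul_kronecker_mul, Matrix.one_mul, hid, hx,
        conjTranspose_conjTranspose]
    set Dxy := E (xᴴ * y) - (E x)ᴴ * E y with hDxydef
    set Dyx := E (yᴴ * x) - (E y)ᴴ * E x with hDyxdef
    set Dyy := E (yᴴ * y) - (E y)ᴴ * E y with hDyydef
    have hexp : ∀ γ : ℂ,
        E ((x + γ • y)ᴴ * (x + γ • y)) - (E (x + γ • y))ᴴ * E (x + γ • y)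
          = γ • Dxy + (starRingEnd ℂ γ) • Dyx + (γ * starRingEnd ℂ γ) • Dyy := by
      intro γ
      rw [hDxydef, hDyxdef, hDyydef]
      simp only [conjTranspose_add, conjTranspose_smul, add_mul, mul_add,
        Matrix.smul_mul, Matrix.mul_smul, map_add, _root_.map_smul, smul_smul, Complex.star_def]
      rw [hxx]
      module
    have hc : ∀ ξ : Fin p → ℂ, star ξ ⬝ᵥ (Dxy *ᵥ ξ) = 0 ∧ star ξ ⬝ᵥ (Dyx *ᵥ ξ) = 0 := by
      intro ξ
      set c := star ξ ⬝ᵥ (Dxy *ᵥ ξ) with hcdef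
      set c' := star ξ ⬝ᵥ (Dyx *ᵥ ξ) with hc'def
      set d := star ξ ⬝ᵥ (Dyy *ᵥ ξ) with hddef
      have hd : 0 ≤ d := (hKS y).dotProduct_mulVec_nonneg ξ
      have hquad : ∀ (t : ℝ) (μ : ℂ), μ * starRingEnd ℂ μ = 1 →
          0 ≤ (t : ℂ) * (μ * c + starRingEnd ℂ μ * c') + (t : ℂ) ^ 2 * d := by
        intro t μ hμ
        have hP := (hKS (x + ((t : ℂ) * μ) • y)).dotProduct_mulVec_nonneg ξ
        rw [hexp] at hP
        have hform : star ξ ⬝ᵥ ((((t : ℂ) * μ) • Dxy + (starRingEnd ℂ ((t : ℂ) * μ)) • Dyx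
            + ((((t : ℂ) * μ) * starRingEnd ℂ ((t : ℂ) * μ))) • Dyy) *ᵥ ξ)
            = (t : ℂ) * (μ * c + starRingEnd ℂ μ * c') + (t : ℂ) ^ 2 * d := by
          simp only [add_mulVec, smul_mulVec, dotProduct_add, dotProduct_smul,
            smul_eq_mul, _root_.map_mul, Complex.conj_ofReal, ← hcdef, ← hc'def, ← hddef]
          linear_combination ((t : ℂ) ^ 2 * d) * hμ
        rw [hform] at hP
        exact hP
      have h1 : c + c' = 0 := by
        apply key_scalar _ _ hd
        intro t
        have := hquad t 1 (by simp)
        simpa using this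
      have h2 : Complex.I * c + (-Complex.I) * c' = 0 := by
        apply key_scalar _ _ hd
        intro t
        have := hquad t Complex.I (by rw [Complex.conj_I, mul_neg, Complex.I_mul_I, neg_neg])
        rw [Complex.conj_I] at this
        convert this using 2
      constructor
      · linear_combination (1 / 2 : ℂ) * h1 - (Complex.I / 2) * h2
          + ((c - c') / 2) * Complex.I_sq
      · linear_combination (1 / 2 : ℂ) * h1 + (Complex.I / 2) * h2
          + ((c' - c) / 2) * Complex.I_sq
    have hDxy : Dxy = 0 := quad_zero _ (fun ξ => (hc ξ).1)
    have hDyx : Dyx = 0 := quad_zero _ (fun ξ => (hc ξ).2)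
    have e1 := sub_eq_zero.mp hDxy
    have e2 := sub_eq_zero.mp hDyx
    rw [hxH, hx, conjTranspose_conjTranspose] at e1
    rw [hx] at e2
    exact ⟨e1, e2⟩
  intro b a
  obtain ⟨L, -⟩ := mult a ((1 : Matrix (Fin p) (Fin p) ℂ) ⊗ₖ b)
  obtain ⟨-, R⟩ := mult aᴴ ((1 : Matrix (Fin p) (Fin p) ℂ) ⊗ₖ bᴴ)
  have hbH : ((1 : Matrix (Fin p) (Fin p) ℂ) ⊗ₖ bᴴ)ᴴ = (1 : Matrix (Fin p) (Fin p) ℂ) ⊗ₖ b := by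
    rw [kron_conjTranspose, conjTranspose_one, conjTranspose_conjTranspose]
  rw [hbH, conjTranspose_conjTranspose] at R
  have hEb : (E ((1 : Matrix (Fin p) (Fin p) ℂ) ⊗ₖ bᴴ))ᴴ
      = E ((1 : Matrix (Fin p) (Fin p) ℂ) ⊗ₖ b) := by
    rw [← star_pres, hbH]
  rw [hEb] at R
  have k1 : ((1 : Matrix (Fin p) (Fin p) ℂ) ⊗ₖ b) * (a ⊗ₖ (1 : Matrix (Fin q) (Fin q) ℂ))
      = a ⊗ₖ b := by rw [← mul_kronecker_mul, Matrix.one_mul, Matrix.mul_one]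
  have k2 : (a ⊗ₖ (1 : Matrix (Fin q) (Fin q) ℂ)) * ((1 : Matrix (Fin p) (Fin p) ℂ) ⊗ₖ b)
      = a ⊗ₖ b := by rw [← mul_kronecker_mul, Matrix.one_mul, Matrix.mul_one]
  rw [k1] at R
  rw [k2] at L
  rw [← R, ← L]
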